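/- Consider an instance G=(V,E) of the MST problem under explorable uncertainty with predicted values ŵ. Let E_M ⊆ E be the set of mandatory edges and E_P ⊆ E the set of prediction mandatory edges. Then every edge e in the symmetric difference E_M Δ E_P satisfies h←(e) ≥ 1; consequently the hop distance satisfies k_h ≥ |E_M Δ E_P|. -/

import Mathlib

/-!
Common framework: the minimum spanning tree problem under explorable
uncertainty with (untrusted) predictions.
-/

open scoped BigOperators
open scoped Classical

noncomputable section

/-- An instance of the MST problem under explorable uncertainty with predictions:
a connected (multi)graph whose edges carry uncertainty intervals (open `(L,U)` for
non-trivial edges, i.e. `L < U`, and the singleton `{L}` for trivial edges, i.e. `L = U`)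
together with predicted values `pw e` lying in the intervals. -/
structure UncGraph where
  V : Type
  E : Type
  fintV : Fintype V
  fintE : Fintype E
  decV : DecidableEq V
  decE : DecidableEq E
  ends : E → Sym2 V
  conn : ∀ u v : V, Relation.ReflTransGen (fun a b => ∃ e : E, ends e = s(a, b)) u v
  L : E → ℝ
  U : E → ℝ
  LU : ∀ e, L e ≤ U e
  pw : E → ℝ
  pw_mem : ∀ e, (L e = U e ∧ pw e = L e) ∨ (L e < pw e ∧ pw e < U e)

attribute [instance] UncGraph.fintV UncGraph.fintE UncGraph.decV UncGraph.decE

namespace UncGraph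

variable (G : UncGraph)

/-- The uncertainty interval of an edge: the open interval `(L e, U e)` for a
non-trivial edge, the singleton `{L e}` for a trivial edge (`L e = U e`). -/
def I (e : G.E) : Set ℝ :=
  {x | (G.L e = G.U e ∧ x = G.L e) ∨ (G.L e < x ∧ x < G.U e)}

/-- A trivial edge: its interval is a singleton. -/
def TrivialEdge (e : G.E) : Prop := G.L e = G.U e

/-- A non-trivial edge: its interval is a nonempty open interval. -/
def NontrivialEdge (e : G.E) : Prop := G.L e < G.U e

/-- `w` is a valid realization of true edge weights. -/
def Valid (w : G.E → ℝ) : Prop := ∀ e, w e ∈ G.I e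

/-- Connectivity of two vertices using only edges from `S`. -/
def ConnectsVia (S : Finset G.E) (u v : G.V) : Prop :=
  Relation.ReflTransGen (fun a b => ∃ e ∈ S, G.ends e = s(a, b)) u v

/-- `S` is a spanning tree: it connects all vertices and has `|V| - 1` edges. -/
def IsSpanningTree (S : Finset G.E) : Prop :=
  (∀ u v : G.V, G.ConnectsVia S u v) ∧ S.card + 1 = Fintype.card G.V

/-- `T` is a minimum spanning tree with respect to the weight function `wf`. -/
def IsMST (wf : G.E → ℝ) (T : Finset G.E) : Prop :=
  G.IsSpanningTree T ∧ ∀ T', G.IsSpanningTree T' → ∑ e ∈ T, wf e ≤ ∑ e ∈ T', wf e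

/-- `wf` agrees with the true values `w` on the queried set `Q` and lies in the
uncertainty intervals elsewhere. -/
def Compatible (w : G.E → ℝ) (Q : Finset G.E) (wf : G.E → ℝ) : Prop :=
  (∀ e ∈ Q, wf e = w e) ∧ ∀ e, wf e ∈ G.I e

/-- The query set `Q` verifies `T`: `T` is an MST for every weight function
compatible with the revealed values. -/
def Verifies (w : G.E → ℝ) (Q T : Finset G.E) : Prop :=
  ∀ wf, G.Compatible w Q wf → G.IsMST wf T

/-- `Q` is a feasible query set for true values `w`. -/
def Feasible (w : G.E → ℝ) (Q : Finset G.E) : Prop :=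
  ∃ T, G.Verifies w Q T

/-- The minimum cardinality of a feasible query set. -/
def optCost (w : G.E → ℝ) : ℕ :=
  sInf {n | ∃ Q, G.Feasible w Q ∧ Q.card = n}

/-- `Q` is an optimal (minimum-cardinality feasible) query set. -/
def IsOptimal (w : G.E → ℝ) (Q : Finset G.E) : Prop :=
  G.Feasible w Q ∧ ∀ Q', G.Feasible w Q' → Q.card ≤ Q'.card

/-- An edge is mandatory if it belongs to every feasible query set. -/
def Mandatory (w : G.E → ℝ) (e : G.E) : Prop :=
  ∀ Q, G.Feasible w Q → e ∈ Q

/-- A witness set intersects every feasible query set. -/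
def IsWitnessSet (w : G.E → ℝ) (W : Finset G.E) : Prop :=
  ∀ Q, G.Feasible w Q → ∃ e ∈ W, e ∈ Q

/-- An edge is prediction mandatory if it is mandatory under the assumption that
all queries return the predicted values. -/
def PredMandatory (e : G.E) : Prop := G.Mandatory G.pw e

/-- An instance is prediction mandatory free if it has no prediction mandatory edge. -/
def PredMandatoryFree : Prop := ∀ e, ¬ G.PredMandatory e

/-- Hop-distance indicator `k_{e'}(e)`: `0` if the prediction `p e` has the same
relation to the interval `I e'` as the true value `w e` (both `≤ L e'`, both
`≥ U e'`, or both strictly inside), and `1` otherwise. -/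
def kErr (p w : G.E → ℝ) (e e' : G.E) : ℕ :=
  if (p e ≤ G.L e' ∧ w e ≤ G.L e') ∨ (G.U e' ≤ p e ∧ G.U e' ≤ w e) ∨
      (G.L e' < p e ∧ p e < G.U e' ∧ G.L e' < w e ∧ w e < G.U e')
  then 0 else 1

/-- `h→(e) = Σ_{e' ≠ e} k_{e'}(e)`. -/
def hright (p w : G.E → ℝ) (e : G.E) : ℕ :=
  ∑ e' ∈ Finset.univ.erase e, G.kErr p w e e'

/-- `h←(e) = Σ_{e' ≠ e} k_e(e')`. -/
def hleft (p w : G.E → ℝ) (e : G.E) : ℕ :=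
  ∑ e' ∈ Finset.univ.erase e, G.kErr p w e' e

/-- `h→(E') = Σ_{e ∈ E'} h→(e)`. -/
def hrightSum (p w : G.E → ℝ) (S : Finset G.E) : ℕ := ∑ e ∈ S, G.hright p w e

/-- `h←(E') = Σ_{e ∈ E'} h←(e)`. -/
def hleftSum (p w : G.E → ℝ) (S : Finset G.E) : ℕ := ∑ e ∈ S, G.hleft p w e

/-- The hop distance of prediction `p` for realization `w`. -/
def hopDist (p w : G.E → ℝ) : ℕ := ∑ e, G.hright p w e

/-- The hop distance `k_h` of the instance's predictions for realization `w`. -/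
def khop (w : G.E → ℝ) : ℕ := G.hopDist G.pw w

/-- Lower-limit weights `w^L`: `L e + ε` for non-trivial edges, the known value
for trivial edges. -/
def lowerWeight (ε : ℝ) (e : G.E) : ℝ := if G.L e = G.U e then G.L e else G.L e + ε

/-- Upper-limit weights `w^U`: `U e - ε` for non-trivial edges, the known value
for trivial edges. -/
def upperWeight (ε : ℝ) (e : G.E) : ℝ := if G.L e = G.U e then G.L e else G.U e - ε

/-- `T` is a lower limit tree: an MST for `w^L` for all sufficiently small `ε > 0`. -/
def IsLowerLimitTree (T : Finset G.E) : Prop :=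
  ∃ ε₀ > (0 : ℝ), ∀ ε : ℝ, 0 < ε → ε < ε₀ → G.IsMST (G.lowerWeight ε) T

/-- `T` is an upper limit tree: an MST for `w^U` for all sufficiently small `ε > 0`. -/
def IsUpperLimitTree (T : Finset G.E) : Prop :=
  ∃ ε₀ > (0 : ℝ), ∀ ε : ℝ, 0 < ε → ε < ε₀ → G.IsMST (G.upperWeight ε) T

/-- `T` is simultaneously the unique lower limit tree and the unique upper
limit tree (`T_L = T_U`, both unique). -/
def UniqueLimitTrees (T : Finset G.E) : Prop :=
  G.IsLowerLimitTree T ∧ G.IsUpperLimitTree T ∧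
  (∀ T', G.IsLowerLimitTree T' → T' = T) ∧
  (∀ T', G.IsUpperLimitTree T' → T' = T)

/-- Number of edge-ends of `S` incident to `v` (loops count twice). -/
def incCount (S : Finset G.E) (v : G.V) : ℕ :=
  ∑ e ∈ S, (if G.ends e = s(v, v) then 2 else if v ∈ G.ends e then 1 else 0)

/-- `S` forms a single cycle: nonempty, every vertex has degree `0` or `2`,
and the support is connected. -/
def IsCycle (S : Finset G.E) : Prop :=
  S.Nonempty ∧ (∀ v, G.incCount S v = 0 ∨ G.incCount S v = 2) ∧
  ∀ u v, G.incCount S u ≠ 0 → G.incCount S v ≠ 0 → G.ConnectsVia S u v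

/-- `C` is the cycle closed by adding the edge `f` to the tree `T`. -/
def IsCycleOf (T : Finset G.E) (f : G.E) (C : Finset G.E) : Prop :=
  G.IsCycle C ∧ f ∈ C ∧ C ⊆ insert f T

/-- `e'` lies in the cut `X_e` between the two components of `T \ {e}`. -/
def InCut (T : Finset G.E) (e e' : G.E) : Prop :=
  ∀ u v : G.V, G.ends e' = s(u, v) → ¬ G.ConnectsVia (T.erase e) u v

/-- `S` is a path between the (distinct) vertices `a` and `b`. -/
def IsPathBetween (S : Finset G.E) (a b : G.V) : Prop :=
  a ≠ b ∧ G.incCount S a = 1 ∧ G.incCount S b = 1 ∧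
  (∀ v, v ≠ a → v ≠ b → G.incCount S v = 0 ∨ G.incCount S v = 2) ∧
  ∀ v, G.incCount S v ≠ 0 → G.ConnectsVia S a v

/-- `{f, l}` is an edge of the vertex cover instance `Ḡ` (w.r.t. the tree `T`):
`f ∉ T`, `l ≠ f` lies on the cycle closed by `f`, both are non-trivial, and
their intervals intersect. -/
def VCEdge (T : Finset G.E) (f l : G.E) : Prop :=
  f ∉ T ∧ l ≠ f ∧ G.NontrivialEdge f ∧ G.NontrivialEdge l ∧
  (∃ C, G.IsCycleOf T f C ∧ l ∈ C) ∧ (G.I f ∩ G.I l).Nonempty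

/-- Adjacency in the vertex cover instance `Ḡ` (symmetrized). -/
def VCAdj (T : Finset G.E) (a b : G.E) : Prop := G.VCEdge T a b ∨ G.VCEdge T b a

/-- `S` is a vertex cover of the vertex cover instance `Ḡ`. -/
def IsVCCover (T S : Finset G.E) : Prop :=
  ∀ a b, G.VCAdj T a b → a ∈ S ∨ b ∈ S

/-- `S` is a minimum vertex cover of the vertex cover instance `Ḡ`. -/
def IsMinVC (T S : Finset G.E) : Prop :=
  G.IsVCCover T S ∧ ∀ S', G.IsVCCover T S' → S.card ≤ S'.card

/-- Edge `e` does not occur in the instance anymore: independently of the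
remaining uncertainty it can be deleted (some MST avoids it, for every
realization) or contracted (some MST contains it, for every realization). -/
def Removable (e : G.E) : Prop :=
  (∀ wf : G.E → ℝ, (∀ e', wf e' ∈ G.I e') → ∃ T, G.IsMST wf T ∧ e ∉ T) ∨
  (∀ wf : G.E → ℝ, (∀ e', wf e' ∈ G.I e') → ∃ T, G.IsMST wf T ∧ e ∈ T)

end UncGraph

/-- The instance obtained from `G` by querying the edges of `Q` under true
values `w`: the intervals of queried edges collapse to the revealed values. -/
def UncGraph.restrict (G : UncGraph) (w : G.E → ℝ) (Q : Finset G.E) : UncGraph where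
  V := G.V
  E := G.E
  fintV := G.fintV
  fintE := G.fintE
  decV := G.decV
  decE := G.decE
  ends := G.ends
  conn := G.conn
  L := fun e => if e ∈ Q then w e else G.L e
  U := fun e => if e ∈ Q then w e else G.U e
  LU := fun e => by by_cases h : e ∈ Q <;> simp [h, G.LU e]
  pw := fun e => if e ∈ Q then w e else G.pw e
  pw_mem := fun e => by
    by_cases h : e ∈ Q
    · simp [h]
    · simpa [h] using G.pw_mem e

/-- A deterministic adaptive query algorithm: given the instance and the set of
already queried edges together with the revealed values, it either picks the next
edge to query or stops (`none`).  The lawfulness condition states that the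
decision may only depend on the revealed values of already queried edges. -/
structure Algorithm where
  next : ∀ G : UncGraph, Finset G.E → (G.E → ℝ) → Option G.E
  lawful : ∀ (G : UncGraph) (Q : Finset G.E) (w w' : G.E → ℝ),
    (∀ e ∈ Q, w e = w' e) → next G Q w = next G Q w'

namespace Algorithm

/-- The set of edges queried by `A` after `n` steps, on instance `G` with true
values `w`; the algorithm stops as soon as the queried set is feasible. -/
def runQueries (A : Algorithm) (G : UncGraph) (w : G.E → ℝ) : ℕ → Finset G.E
  | 0 => ∅
  | n + 1 =>
    let Q := A.runQueries G w n
    if G.Feasible w Q then Q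
    else
      match A.next G Q w with
      | some e => insert e Q
      | none => Q

/-- The final query set of the run of `A`. -/
def finalQueries (A : Algorithm) (G : UncGraph) (w : G.E → ℝ) : Finset G.E :=
  A.runQueries G w (Fintype.card G.E + 1)

/-- The number of queries made by `A` on instance `G` with true values `w`. -/
def algCost (A : Algorithm) (G : UncGraph) (w : G.E → ℝ) : ℕ :=
  (A.finalQueries G w).card

/-- `A` solves every instance: it always ends with a feasible query set. -/
def Solves (A : Algorithm) : Prop :=
  ∀ (G : UncGraph) (w : G.E → ℝ), G.Valid w → G.Feasible w (A.finalQueries G w)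

/-- `A` is `α`-consistent: on instances with correct predictions it makes at
most `α · |OPT|` queries. -/
def Consistent (A : Algorithm) (α : ℝ) : Prop :=
  ∀ G : UncGraph, (A.algCost G G.pw : ℝ) ≤ α * (G.optCost G.pw : ℝ)

/-- `A` is `β`-robust: it makes at most `β · |OPT|` queries on every instance. -/
def Robust (A : Algorithm) (β : ℝ) : Prop :=
  ∀ (G : UncGraph) (w : G.E → ℝ), G.Valid w → (A.algCost G w : ℝ) ≤ β * (G.optCost w : ℝ)

/-- Run of a preprocessing algorithm: it stops exactly when `next` returns
`none` (rather than when the queried set is feasible). -/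
def runPre (A : Algorithm) (G : UncGraph) (w : G.E → ℝ) : ℕ → Finset G.E
  | 0 => ∅
  | n + 1 =>
    let Q := A.runPre G w n
    match A.next G Q w with
    | some e => insert e Q
    | none => Q

/-- The final query set of a preprocessing run of `A`. -/
def preQueries (A : Algorithm) (G : UncGraph) (w : G.E → ℝ) : Finset G.E :=
  A.runPre G w (Fintype.card G.E + 1)

end Algorithm

section Aux

open Finset

namespace UncGraph

variable {G : UncGraph}

theorem cv_refl (S : Finset G.E) (u : G.V) : G.ConnectsVia S u u :=
  Relation.ReflTransGen.refl

theorem cv_symm {S : Finset G.E} {u v : G.V} (h : G.ConnectsVia S u v) :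
    G.ConnectsVia S v u := by
  refine @Std.Symm.symm _ _ (@Relation.ReflTransGen.stdSymm _ _ ⟨?_⟩) _ _ h
  rintro a b ⟨e, he, hse⟩
  exact ⟨e, he, by rwa [Sym2.eq_swap]⟩

theorem cv_trans {S : Finset G.E} {u v x : G.V} (h : G.ConnectsVia S u v)
    (h' : G.ConnectsVia S v x) : G.ConnectsVia S u x :=
  Relation.ReflTransGen.trans h h'

theorem cv_mono {S S' : Finset G.E} (hss : S ⊆ S') {u v : G.V}
    (h : G.ConnectsVia S u v) : G.ConnectsVia S' u v := by
  refine Relation.ReflTransGen.mono (fun a b => ?_) _ _ h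
  rintro ⟨e, he, hse⟩
  exact ⟨e, hss he, hse⟩

theorem cv_step {S : Finset G.E} {f : G.E} (hf : f ∈ S) {a b : G.V}
    (hab : G.ends f = s(a, b)) : G.ConnectsVia S a b :=
  Relation.ReflTransGen.single ⟨f, hf, hab⟩

theorem cv_empty {u v : G.V} (h : G.ConnectsVia (∅ : Finset G.E) u v) : u = v := by
  induction h with
  | refl => rfl
  | tail _ h2 ih => rcases h2 with ⟨e, he, _⟩; exact absurd he (by simp)

/-- USE lemma -/
theorem cv_insert {D : Finset G.E} {f : G.E} {a b x y : G.V}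
    (hf : G.ends f = s(a, b)) (h : G.ConnectsVia (insert f D) x y) :
    G.ConnectsVia D x y ∨ (G.ConnectsVia D x a ∧ G.ConnectsVia D b y) ∨
      (G.ConnectsVia D x b ∧ G.ConnectsVia D a y) := by
  induction h with
  | refl => exact Or.inl (cv_refl _ _)
  | @tail y' y _ h2 ih =>
    rcases h2 with ⟨g, hg, hends⟩
    rcases Finset.mem_insert.1 hg with rfl | hgD
    · have : (y' = a ∧ y = b) ∨ (y' = b ∧ y = a) := by
        rw [hf] at hends; exact Sym2.eq_iff.1 hends.symm
      rcases this with ⟨rfl, rfl⟩ | ⟨rfl, rfl⟩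
      · rcases ih with h1 | ⟨h1, h2⟩ | ⟨h1, h2⟩
        · exact Or.inr (Or.inl ⟨h1, cv_refl _ _⟩)
        · exact Or.inr (Or.inl ⟨h1, cv_refl _ _⟩)
        · exact Or.inl h1
      · rcases ih with h1 | ⟨h1, h2⟩ | ⟨h1, h2⟩
        · exact Or.inr (Or.inr ⟨h1, cv_refl _ _⟩)
        · exact Or.inl h1
        · exact Or.inr (Or.inr ⟨h1, cv_refl _ _⟩)
    · have hstep : G.ConnectsVia D y' y := cv_step hgD hends
      rcases ih with h1 | ⟨h1, h2⟩ | ⟨h1, h2⟩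
      · exact Or.inl (cv_trans h1 hstep)
      · exact Or.inr (Or.inl ⟨h1, cv_trans h2 hstep⟩)
      · exact Or.inr (Or.inr ⟨h1, cv_trans h2 hstep⟩)

/-- SUBST -/
theorem cv_of_insert_of_cv {D : Finset G.E} {f : G.E} {a b x y : G.V}
    (hf : G.ends f = s(a, b)) (hab : G.ConnectsVia D a b)
    (h : G.ConnectsVia (insert f D) x y) : G.ConnectsVia D x y := by
  rcases cv_insert hf h with h1 | ⟨h1, h2⟩ | ⟨h1, h2⟩
  · exact h1
  · exact cv_trans h1 (cv_trans hab h2)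
  · exact cv_trans h1 (cv_trans (cv_symm hab) h2)

/-- CROSSWALK -/
theorem cv_cross {S : Finset G.E} {u v : G.V} (P : G.V → Prop)
    (h : G.ConnectsVia S u v) (hu : P u) (hv : ¬ P v) :
    ∃ f ∈ S, ∃ a b, G.ends f = s(a, b) ∧ P a ∧ ¬ P b := by
  induction h with
  | refl => exact absurd hu hv
  | @tail y' y _ h2 ih =>
    by_cases hy' : P y'
    · rcases h2 with ⟨g, hg, hends⟩
      exact ⟨g, hg, y', y, hends, hy', hv⟩
    · exact ih hy'

end UncGraph

end Aux

section Aux2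

open Finset

namespace UncGraph

variable {G : UncGraph}

/-- The connectivity class of `v` (as a finset). -/
noncomputable def cl (G : UncGraph) (S : Finset G.E) (v : G.V) : Finset G.V :=
  Finset.univ.filter (fun x => G.ConnectsVia S x v)

theorem mem_cl {S : Finset G.E} {x v : G.V} :
    x ∈ G.cl S v ↔ G.ConnectsVia S x v := by simp [UncGraph.cl]

theorem cl_eq_of_cv {S : Finset G.E} {v w : G.V} (h : G.ConnectsVia S v w) :
    G.cl S v = G.cl S w := by
  ext x
  simp only [mem_cl]
  exact ⟨fun hx => cv_trans hx h, fun hx => cv_trans hx (cv_symm h)⟩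

theorem self_mem_cl {S : Finset G.E} {v : G.V} : v ∈ G.cl S v :=
  mem_cl.2 (cv_refl _ _)

/-- COMP: counting bound. -/
theorem card_le_card_add_classes (G : UncGraph) (S : Finset G.E) :
    Fintype.card G.V ≤ S.card + (Finset.univ.image (G.cl S)).card := by
  classical
  induction S using Finset.induction_on with
  | empty =>
    have hcl : ∀ v : G.V, G.cl ∅ v = {v} := by
      intro v; ext x
      simp only [mem_cl, Finset.mem_singleton]
      exact ⟨fun h => cv_empty h, fun h => h ▸ cv_refl _ _⟩
    have : (Finset.univ.image (G.cl (∅ : Finset G.E))).card = Fintype.card G.V := by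
      rw [show G.cl (∅ : Finset G.E) = fun v => {v} from funext hcl]
      rw [Finset.card_image_of_injective _ (fun a b h => Finset.singleton_injective h)]
      simp
    simp [this]
  | @insert f S hfS ih =>
    have key : (Finset.univ.image (G.cl S)).card ≤
        (Finset.univ.image (G.cl (insert f S))).card + 1 := by
      obtain ⟨a, b, hab⟩ : ∃ a b, G.ends f = s(a, b) := by
        induction G.ends f using Sym2.ind with
        | _ a b => exact ⟨a, b, rfl⟩
      -- description of classes after insertion
      have hiff : ∀ x y, G.ConnectsVia (insert f S) x y ↔
          (G.ConnectsVia S x y ∨ (G.ConnectsVia S x a ∧ G.ConnectsVia S b y) ∨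
            (G.ConnectsVia S x b ∧ G.ConnectsVia S a y)) := by
        intro x y
        constructor
        · exact cv_insert hab
        · have hs : f ∈ insert f S := Finset.mem_insert_self f S
          have hstep : G.ConnectsVia (insert f S) a b := cv_step hs hab
          have hmono : ∀ {p q : G.V}, G.ConnectsVia S p q →
              G.ConnectsVia (insert f S) p q := fun h =>
            cv_mono (Finset.subset_insert _ _) h
          rintro (h | ⟨h1, h2⟩ | ⟨h1, h2⟩)
          · exact hmono h
          · exact cv_trans (hmono h1) (cv_trans hstep (hmono h2))
          · exact cv_trans (hmono h1) (cv_trans (cv_symm hstep) (hmono h2))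
      by_cases hab' : G.ConnectsVia S a b
      · have : G.cl (insert f S) = G.cl S := by
          funext v; ext x
          simp only [mem_cl, hiff]
          constructor
          · rintro (h | ⟨h1, h2⟩ | ⟨h1, h2⟩)
            · exact h
            · exact cv_trans h1 (cv_trans hab' h2)
            · exact cv_trans h1 (cv_trans (cv_symm hab') h2)
          · exact fun h => Or.inl h
        rw [this]; omega
      · -- merge map
        set F : Finset G.V → Finset G.V := fun C =>
          if C = G.cl S a ∨ C = G.cl S b then G.cl S a ∪ G.cl S b else C with hF
        have hclF : ∀ v, G.cl (insert f S) v = F (G.cl S v) := by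
          intro v
          by_cases hva : G.ConnectsVia S v a
          · have h1 : G.cl S v = G.cl S a := cl_eq_of_cv hva
            have : F (G.cl S v) = G.cl S a ∪ G.cl S b := by
              simp [hF, h1]
            rw [this]
            ext x
            simp only [mem_cl, hiff, Finset.mem_union, mem_cl]
            constructor
            · rintro (h | ⟨h1', h2⟩ | ⟨h1', h2⟩)
              · exact Or.inl (cv_trans h hva)
              · exact Or.inl h1'
              · exact Or.inr h1'
            · rintro (h | h)
              · exact Or.inl (cv_trans h (cv_symm hva))
              · exact Or.inr (Or.inr ⟨h, cv_symm hva⟩)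
          · by_cases hvb : G.ConnectsVia S v b
            · have h1 : G.cl S v = G.cl S b := cl_eq_of_cv hvb
              have : F (G.cl S v) = G.cl S a ∪ G.cl S b := by
                simp [hF, h1]
              rw [this]
              ext x
              simp only [mem_cl, hiff, Finset.mem_union, mem_cl]
              constructor
              · rintro (h | ⟨h1', h2⟩ | ⟨h1', h2⟩)
                · exact Or.inr (cv_trans h hvb)
                · exact Or.inl h1'
                · exact Or.inr h1'
              · rintro (h | h)
                · exact Or.inr (Or.inl ⟨h, cv_symm hvb⟩)
                · exact Or.inl (cv_trans h (cv_symm hvb))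
            · have hne1 : G.cl S v ≠ G.cl S a := by
                intro h
                exact hva (mem_cl.1 (h ▸ self_mem_cl))
              have hne2 : G.cl S v ≠ G.cl S b := by
                intro h
                exact hvb (mem_cl.1 (h ▸ self_mem_cl))
              have : F (G.cl S v) = G.cl S v := by
                rw [hF]; exact if_neg (by tauto)
              rw [this]
              ext x
              simp only [mem_cl, hiff]
              constructor
              · rintro (h | ⟨h1', h2⟩ | ⟨h1', h2⟩)
                · exact h
                · exact absurd (cv_symm h2) hvb
                · exact absurd (cv_symm h2) hva
              · exact fun h => Or.inl h
        have himg : Finset.univ.image (G.cl (insert f S)) =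
            (Finset.univ.image (G.cl S)).image F := by
          rw [Finset.image_image]
          congr 1
          funext v
          exact hclF v
        rw [himg]
        -- |A| ≤ |A.image F| + 1
        set A := Finset.univ.image (G.cl S) with hA
        have hmemcl : ∀ C ∈ A, ∃ v, C = G.cl S v := by
          intro C hC
          rcases Finset.mem_image.1 hC with ⟨v, _, rfl⟩
          exact ⟨v, rfl⟩
        have hinj : Set.InjOn F ↑(A.erase (G.cl S b)) := by
          intro x hx y hy hxy
          rw [Finset.mem_coe, Finset.mem_erase] at hx hy
          have hva : ∀ C ∈ A, C ≠ G.cl S b → F C ≠ C →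
              C = G.cl S a ∧ F C = G.cl S a ∪ G.cl S b := by
            intro C hC hCb hFC
            rw [hF] at hFC ⊢
            by_cases h : C = G.cl S a ∨ C = G.cl S b
            · rcases h with h | h
              · exact ⟨h, by simp [h]⟩
              · exact absurd h hCb
            · simp [h] at hFC
          -- key: no class equals cl a ∪ cl b
          have hnotun : ∀ C ∈ A, C ≠ G.cl S a ∪ G.cl S b := by
            intro C hC heq
            rcases hmemcl C hC with ⟨v, rfl⟩
            have ha : a ∈ G.cl S v := by rw [heq]; exact Finset.mem_union_left _ self_mem_cl
            have hb : b ∈ G.cl S v := by rw [heq]; exact Finset.mem_union_right _ self_mem_cl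
            exact hab' (cv_trans (mem_cl.1 ha) (cv_symm (mem_cl.1 hb)))
          by_cases hxalt : F x = x
          · by_cases hyalt : F y = y
            · rw [hxalt, hyalt] at hxy; exact hxy
            · rcases hva y hy.2 hy.1 hyalt with ⟨_, hFy⟩
              rw [hxalt] at hxy
              exact absurd (hxy.trans hFy ▸ rfl : x = G.cl S a ∪ G.cl S b)
                (hnotun x hx.2)
          · rcases hva x hx.2 hx.1 hxalt with ⟨hxa, hFx⟩
            by_cases hyalt : F y = y
            · rw [hyalt] at hxy
              exact absurd (hxy ▸ hFx : y = G.cl S a ∪ G.cl S b).symm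
                (fun h => hnotun y hy.2 h.symm)
            · rcases hva y hy.2 hy.1 hyalt with ⟨hya, _⟩
              rw [hxa, hya]
        have hmaps : ∀ C ∈ A.erase (G.cl S b), F C ∈ A.image F := by
          intro C hC
          exact Finset.mem_image_of_mem F (Finset.mem_of_mem_erase hC)
        have h1 : (A.erase (G.cl S b)).card ≤ (A.image F).card :=
          Finset.card_le_card_of_injOn F hmaps hinj
        have h2 : A.card ≤ (A.erase (G.cl S b)).card + 1 := by
          by_cases hb : G.cl S b ∈ A
          · rw [Finset.card_erase_add_one hb]
          · rw [Finset.erase_eq_of_notMem hb]; omega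
        omega
    rw [Finset.card_insert_of_notMem hfS]
    omega

/-- CARD: a connecting set has at least `|V| - 1` edges. -/
theorem card_V_le (G : UncGraph) (S : Finset G.E)
    (h : ∀ x y : G.V, G.ConnectsVia S x y) :
    Fintype.card G.V ≤ S.card + 1 := by
  classical
  cases isEmpty_or_nonempty G.V with
  | inl he => simp [Fintype.card_eq_zero]
  | inr hne =>
    obtain ⟨v₀⟩ := hne
    have : Finset.univ.image (G.cl S) = {G.cl S v₀} := by
      apply Finset.eq_singleton_iff_unique_mem.2
      constructor
      · exact Finset.mem_image_of_mem _ (Finset.mem_univ v₀)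
      · intro C hC
        rcases Finset.mem_image.1 hC with ⟨v, _, rfl⟩
        exact cl_eq_of_cv (h v v₀)
    have h2 := G.card_le_card_add_classes S
    rw [this] at h2
    simpa using h2

end UncGraph

end Aux2

section Aux3

open Finset

namespace UncGraph

variable {G : UncGraph}

theorem cl_empty (G : UncGraph) (v : G.V) : G.cl (∅ : Finset G.E) v = {v} := by
  ext x
  simp only [mem_cl, Finset.mem_singleton]
  exact ⟨fun h => cv_empty h, fun h => h ▸ cv_refl _ _⟩

theorem span_aux (G : UncGraph) (r : G.V) : ∀ k : ℕ, ∀ S : Finset G.E,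
    (∀ f ∈ S, ∀ a b, G.ends f = s(a, b) → a ∈ G.cl S r ∧ b ∈ G.cl S r) →
    (G.cl S r).card = S.card + 1 →
    Fintype.card G.V ≤ (G.cl S r).card + k →
    ∃ T, G.IsSpanningTree T := by
  intro k
  induction k with
  | zero =>
    intro S hinv hcard hbound
    have huniv : G.cl S r = Finset.univ := by
      apply Finset.eq_univ_of_card
      have : (G.cl S r).card ≤ Fintype.card G.V := by
        simpa using Finset.card_le_card (Finset.subset_univ (G.cl S r))
      omega
    have hcv : (G.cl S r).card = Fintype.card G.V := by rw [huniv]; simp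
    refine ⟨S, fun x y => ?_, by omega⟩
    have hx : G.ConnectsVia S x r := mem_cl.1 (huniv ▸ Finset.mem_univ x)
    have hy : G.ConnectsVia S y r := mem_cl.1 (huniv ▸ Finset.mem_univ y)
    exact cv_trans hx (cv_symm hy)
  | succ k ih =>
    intro S hinv hcard hbound
    by_cases huniv : G.cl S r = Finset.univ
    · refine ⟨S, fun x y => ?_, ?_⟩
      · have hx : G.ConnectsVia S x r := mem_cl.1 (huniv ▸ Finset.mem_univ x)
        have hy : G.ConnectsVia S y r := mem_cl.1 (huniv ▸ Finset.mem_univ y)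
        exact cv_trans hx (cv_symm hy)
      · have h1 : (G.cl S r).card = Fintype.card G.V := by
          rw [huniv]; simp
        omega
    · obtain ⟨x, hx⟩ : ∃ x, x ∉ G.cl S r := by
        by_contra hc
        push_neg at hc
        exact huniv (Finset.eq_univ_of_forall hc)
      have hconn : G.ConnectsVia Finset.univ r x := by
        have := G.conn r x
        refine Relation.ReflTransGen.mono (fun p q => ?_) _ _ this
        rintro ⟨e, he⟩
        exact ⟨e, Finset.mem_univ e, he⟩
      obtain ⟨g, _, a, b, hab, ha, hb⟩ :=
        cv_cross (fun z => z ∈ G.cl S r) hconn self_mem_cl hx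
      have hgS : g ∉ S := by
        intro hgS
        exact hb (hinv g hgS a b hab).2
      -- no S-path reaches b from outside {b}
      have hbonly : ∀ z, G.ConnectsVia S z b → z = b := by
        intro z hz
        rcases Relation.ReflTransGen.cases_tail hz with h | ⟨c, _, hstep⟩
        · exact h.symm
        · rcases hstep with ⟨f, hfS, hf⟩
          exact absurd (hinv f hfS c b hf).2 hb
      have hclS' : G.cl (insert g S) r = insert b (G.cl S r) := by
        ext z
        simp only [mem_cl, Finset.mem_insert]
        have hbr : ¬ G.ConnectsVia S b r := fun hh => hb (mem_cl.2 hh)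
        constructor
        · intro h
          rcases cv_insert hab h with h1 | ⟨h1, h2⟩ | ⟨h1, h2⟩
          · exact Or.inr h1
          · exact absurd h2 hbr
          · exact Or.inl (hbonly z h1)
        · intro h
          have hstep : G.ConnectsVia (insert g S) a b :=
            cv_step (Finset.mem_insert_self g S) hab
          rcases h with h | h
          · rw [h]
            exact cv_trans (cv_symm hstep)
              (cv_mono (Finset.subset_insert _ _) (mem_cl.1 ha))
          · exact cv_mono (Finset.subset_insert _ _) h
      have hsub : G.cl S r ⊆ G.cl (insert g S) r := by
        intro z hz
        exact mem_cl.2 (cv_mono (Finset.subset_insert _ _) (mem_cl.1 hz))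
      refine ih (insert g S) ?_ ?_ ?_
      · intro f hf c d hcd
        rcases Finset.mem_insert.1 hf with rfl | hfS
        · have : (c = a ∧ d = b) ∨ (c = b ∧ d = a) := by
            rw [hab] at hcd; exact Sym2.eq_iff.1 hcd.symm
        -- endpoints of g
          rcases this with ⟨rfl, rfl⟩ | ⟨rfl, rfl⟩
          · exact ⟨hsub ha, hclS' ▸ Finset.mem_insert_self _ _⟩
          · exact ⟨hclS' ▸ Finset.mem_insert_self _ _, hsub ha⟩
        · have := hinv f hfS c d hcd
          exact ⟨hsub this.1, hsub this.2⟩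
      · rw [hclS', Finset.card_insert_of_notMem hb,
          Finset.card_insert_of_notMem hgS, hcard]
      · rw [hclS', Finset.card_insert_of_notMem hb]
        omega

theorem exists_spanning_tree (G : UncGraph) (hne : Nonempty G.V) :
    ∃ T, G.IsSpanningTree T := by
  obtain ⟨r⟩ := hne
  refine G.span_aux r (Fintype.card G.V) ∅ (by simp) ?_ ?_
  · rw [cl_empty]; simp
  · rw [cl_empty]; simp

theorem tree_essential {T : Finset G.E} (hT : G.IsSpanningTree T) {f : G.E}
    (hf : f ∈ T) {a b : G.V} (hab : G.ends f = s(a, b)) :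
    ¬ G.ConnectsVia (T.erase f) a b := by
  intro h
  have hall : ∀ x y, G.ConnectsVia (T.erase f) x y := by
    intro x y
    refine cv_of_insert_of_cv hab h ?_
    rw [Finset.insert_erase hf]
    exact hT.1 x y
  have hcard := G.card_V_le _ hall
  have h1 : (T.erase f).card + 1 = T.card := Finset.card_erase_add_one hf
  have h2 := hT.2
  omega

theorem connect_glue {D : Finset G.E} {g : G.E} {u v : G.V}
    (hends : G.ends g = s(u, v))
    (hdich : ∀ x, G.ConnectsVia D x u ∨ G.ConnectsVia D x v) :
    ∀ x y, G.ConnectsVia (insert g D) x y := by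
  have hstep : G.ConnectsVia (insert g D) u v :=
    cv_step (Finset.mem_insert_self g D) hends
  have hxu : ∀ x, G.ConnectsVia (insert g D) x u := by
    intro x
    rcases hdich x with h | h
    · exact cv_mono (Finset.subset_insert _ _) h
    · exact cv_trans (cv_mono (Finset.subset_insert _ _) h) (cv_symm hstep)
  intro x y
  exact cv_trans (hxu x) (cv_symm (hxu y))

/-- EXCH_OUT: swap `e` out of a spanning tree for an edge of a connecting walk. -/
theorem exch_out {T' : Finset G.E} (hT' : G.IsSpanningTree T') {e : G.E}
    (he : e ∈ T') {u v : G.V} (hends : G.ends e = s(u, v)) {W : Finset G.E}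
    (heW : e ∉ W) (hw : G.ConnectsVia W u v) :
    ∃ f ∈ W, f ∉ T'.erase e ∧ G.IsSpanningTree (insert f (T'.erase e)) ∧
      e ∉ insert f (T'.erase e) := by
  set D := T'.erase e with hD
  have hnc : ¬ G.ConnectsVia D u v := tree_essential hT' he hends
  obtain ⟨f, hfW, a, b, hab, ha, hb⟩ :=
    cv_cross (fun z => G.ConnectsVia D u z) hw (cv_refl _ _) hnc
  have hfD : f ∉ D := fun hfD => hb (cv_trans ha (cv_step hfD hab))
  have hdich : ∀ x, G.ConnectsVia D x u ∨ G.ConnectsVia D x v := by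
    intro x
    have hx : G.ConnectsVia (insert e D) x u := by
      rw [hD, Finset.insert_erase he]; exact hT'.1 x u
    rcases cv_insert hends hx with h | ⟨h1, _⟩ | ⟨h1, _⟩
    · exact Or.inl h
    · exact Or.inl h1
    · exact Or.inr h1
  have hbv : G.ConnectsVia D b v := by
    rcases hdich b with h | h
    · exact absurd (cv_symm h) hb
    · exact h
  have hdich2 : ∀ x, G.ConnectsVia D x a ∨ G.ConnectsVia D x b := by
    intro x
    rcases hdich x with h | h
    · exact Or.inl (cv_trans h ha)
    · exact Or.inr (cv_trans h (cv_symm hbv))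
  have hconn := connect_glue hab hdich2
  have hcard : (insert f D).card + 1 = Fintype.card G.V := by
    rw [Finset.card_insert_of_notMem hfD]
    have h1 : D.card + 1 = T'.card := Finset.card_erase_add_one he
    have h2 := hT'.2
    omega
  have heD : e ∉ insert f D := by
    intro h
    rcases Finset.mem_insert.1 h with rfl | h
    · exact heW hfW
    · exact absurd h (Finset.notMem_erase e T')
  exact ⟨f, hfW, hfD, ⟨hconn, hcard⟩, heD⟩

/-- EXCH_IN: swap `e` into a spanning tree, removing an edge crossing `P`. -/
theorem exch_in {T' : Finset G.E} (hT' : G.IsSpanningTree T') {e : G.E}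
    (he : e ∉ T') {u v : G.V} (hends : G.ends e = s(u, v)) (P : G.V → Prop)
    (hu : P u) (hv : ¬ P v) :
    ∃ f ∈ T', (∃ a b, G.ends f = s(a, b) ∧ P a ∧ ¬ P b) ∧
      G.IsSpanningTree (insert e (T'.erase f)) ∧
      (insert e (T'.erase f)).erase e = T'.erase f ∧ e ∈ insert e (T'.erase f) := by
  classical
  -- minimal connecting subset
  have hTuv : G.ConnectsVia T' u v := hT'.1 u v
  have hne : ((T'.powerset).filter (fun M => G.ConnectsVia M u v)).Nonempty :=
    ⟨T', Finset.mem_filter.2 ⟨Finset.mem_powerset_self T', hTuv⟩⟩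
  obtain ⟨M, hM, hmin⟩ := Finset.exists_min_image _ Finset.card hne
  rw [Finset.mem_filter, Finset.mem_powerset] at hM
  obtain ⟨hMT', hMuv⟩ := hM
  obtain ⟨f, hfM, a, b, hab, ha, hb⟩ := cv_cross P hMuv hu hv
  have hfT' : f ∈ T' := hMT' hfM
  have hnem : ¬ G.ConnectsVia (M.erase f) u v := by
    intro h
    have hmem : M.erase f ∈ (T'.powerset).filter (fun M => G.ConnectsVia M u v) :=
      Finset.mem_filter.2
        ⟨Finset.mem_powerset.2 ((Finset.erase_subset f M).trans hMT'), h⟩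
    have := hmin _ hmem
    have := Finset.card_erase_add_one hfM
    omega
  set D := T'.erase f with hD
  have hM'D : M.erase f ⊆ D := Finset.erase_subset_erase f hMT'
  have horient : (G.ConnectsVia D u a ∧ G.ConnectsVia D b v) ∨
      (G.ConnectsVia D u b ∧ G.ConnectsVia D a v) := by
    have hins : G.ConnectsVia (insert f (M.erase f)) u v := by
      rw [Finset.insert_erase hfM]; exact hMuv
    rcases cv_insert hab hins with h | ⟨h1, h2⟩ | ⟨h1, h2⟩
    · exact absurd h hnem
    · exact Or.inl ⟨cv_mono hM'D h1, cv_mono hM'D h2⟩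
    · exact Or.inr ⟨cv_mono hM'D h1, cv_mono hM'D h2⟩
  have hdich : ∀ x, G.ConnectsVia D x u ∨ G.ConnectsVia D x v := by
    intro x
    have hx : G.ConnectsVia (insert f D) x u := by
      rw [hD, Finset.insert_erase hfT']; exact hT'.1 x u
    rcases cv_insert hab hx with h | ⟨h1, _⟩ | ⟨h1, _⟩
    · exact Or.inl h
    · -- x ~ a
      rcases horient with ⟨hua, hbv⟩ | ⟨hub, hav⟩
      · exact Or.inl (cv_trans h1 (cv_symm hua))
      · exact Or.inr (cv_trans h1 hav)
    · -- x ~ b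
      rcases horient with ⟨hua, hbv⟩ | ⟨hub, hav⟩
      · exact Or.inr (cv_trans h1 hbv)
      · exact Or.inl (cv_trans h1 (cv_symm hub))
  have hconn := connect_glue hends hdich
  have heD : e ∉ D := fun h => he (Finset.mem_of_mem_erase h)
  have hcard : (insert e D).card + 1 = Fintype.card G.V := by
    rw [Finset.card_insert_of_notMem heD]
    have h1 : D.card + 1 = T'.card := Finset.card_erase_add_one hfT'
    have h2 := hT'.2
    omega
  exact ⟨f, hfT', ⟨a, b, hab, ha, hb⟩, ⟨hconn, hcard⟩,
    Finset.erase_insert heD, Finset.mem_insert_self _ _⟩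

end UncGraph

end Aux3

section Aux4

open Finset

namespace UncGraph

variable {G : UncGraph}

/-- Edges other than `e` whose weight is at most `L e`. -/
noncomputable def lowset (G : UncGraph) (ω : G.E → ℝ) (e : G.E) : Finset G.E :=
  (Finset.univ.erase e).filter (fun f => ω f ≤ G.L e)

/-- Edges other than `e` whose weight is less than `U e`. -/
noncomputable def smallset (G : UncGraph) (ω : G.E → ℝ) (e : G.E) : Finset G.E :=
  (Finset.univ.erase e).filter (fun f => ω f < G.U e)

theorem not_mem_lowset (G : UncGraph) (ω : G.E → ℝ) (e : G.E) :
    e ∉ G.lowset ω e := fun h =>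
  (Finset.mem_erase.1 (Finset.mem_filter.1 h).1).1 rfl

theorem not_mem_smallset (G : UncGraph) (ω : G.E → ℝ) (e : G.E) :
    e ∉ G.smallset ω e := fun h =>
  (Finset.mem_erase.1 (Finset.mem_filter.1 h).1).1 rfl

theorem mem_I_nontriv {e : G.E} (hLU : G.L e < G.U e) {x : ℝ} :
    x ∈ G.I e ↔ G.L e < x ∧ x < G.U e := by
  constructor
  · rintro (⟨h1, _⟩ | h)
    · exact absurd h1 (ne_of_lt hLU)
    · exact h
  · exact fun h => Or.inr h

theorem midpoint_mem_I {e : G.E} (hLU : G.L e < G.U e) :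
    (G.L e + G.U e) / 2 ∈ G.I e :=
  Or.inr ⟨by linarith, by linarith⟩

theorem sum_update_of_mem' {ω : G.E → ℝ} {e : G.E} {T : Finset G.E} (he : e ∈ T)
    (x : ℝ) : ∑ f ∈ T, Function.update ω e x f = x + ∑ f ∈ T.erase e, ω f := by
  rw [Finset.sum_update_of_mem he, Finset.sdiff_singleton_eq_erase]

theorem sum_update_of_not_mem' {ω : G.E → ℝ} {e : G.E} {T : Finset G.E}
    (he : e ∉ T) (x : ℝ) : ∑ f ∈ T, Function.update ω e x f = ∑ f ∈ T, ω f :=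
  Finset.sum_congr rfl fun f hf =>
    Function.update_of_ne (by rintro rfl; exact he hf) _ _

theorem feasible_mono {ω : G.E → ℝ} {Q Q' : Finset G.E} (hsub : Q ⊆ Q')
    (h : G.Feasible ω Q) : G.Feasible ω Q' := by
  obtain ⟨T, hT⟩ := h
  exact ⟨T, fun wf hc => hT wf ⟨fun f hf => hc.1 f (hsub hf), hc.2⟩⟩

theorem mandatory_iff_not_feasible (ω : G.E → ℝ) (e : G.E) :
    G.Mandatory ω e ↔ ¬ G.Feasible ω (Finset.univ.erase e) := by
  constructor
  · intro h hf
    exact absurd (h _ hf) (Finset.notMem_erase e _)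
  · intro h Q hQ
    by_contra heQ
    exact h (feasible_mono (fun q hq => Finset.mem_erase.2
      ⟨fun hqe => heQ (hqe ▸ hq), Finset.mem_univ q⟩) hQ)

theorem feasible_erase_iff {ω : G.E → ℝ} (hw : G.Valid ω) (e : G.E) :
    G.Feasible ω (Finset.univ.erase e) ↔
      ∃ T, ∀ x ∈ G.I e, G.IsMST (Function.update ω e x) T := by
  constructor
  · rintro ⟨T, hT⟩
    refine ⟨T, fun x hx => hT _ ⟨fun f hf => ?_, fun f => ?_⟩⟩
    · exact Function.update_of_ne (Finset.mem_erase.1 hf).1 _ _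
    · by_cases hfe : f = e
      · subst hfe; rw [Function.update_self]; exact hx
      · rw [Function.update_of_ne hfe]; exact hw f
  · rintro ⟨T, hT⟩
    refine ⟨T, fun wf hc => ?_⟩
    have hwf : wf = Function.update ω e (wf e) := by
      funext f
      by_cases hfe : f = e
      · subst hfe; rw [Function.update_self]
      · rw [Function.update_of_ne hfe]
        exact hc.1 f (Finset.mem_erase.2 ⟨hfe, Finset.mem_univ f⟩)
    rw [hwf]
    exact hT (wf e) (hwf ▸ hc.2 e)

/-- The main characterization of verifiability with everything but `e` queried. -/
theorem feas_char {ω : G.E → ℝ} {e : G.E} {u v : G.V}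
    (hends : G.ends e = s(u, v)) (hLU : G.L e < G.U e) :
    (∃ T, ∀ x ∈ G.I e, G.IsMST (Function.update ω e x) T) ↔
      (G.ConnectsVia (G.lowset ω e) u v ∨ ¬ G.ConnectsVia (G.smallset ω e) u v) := by
  classical
  constructor
  · rintro ⟨T, hT⟩
    have hmid := midpoint_mem_I (G := G) hLU
    have hTtree : G.IsSpanningTree T := (hT _ hmid).1
    by_contra hcon
    push_neg at hcon
    obtain ⟨hlow, hsmall⟩ := hcon
    by_cases he : e ∈ T
    · -- swap e out along the small walk
      obtain ⟨f, hfW, hfD, htree'', he''⟩ :=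
        exch_out hTtree he hends (G.not_mem_smallset ω e) hsmall
      have hfU : ω f < G.U e := (Finset.mem_filter.1 hfW).2
      have hle : ∀ x ∈ G.I e, x ≤ ω f := by
        intro x hx
        have h2 := (hT x hx).2 _ htree''
        rw [sum_update_of_mem' he, sum_update_of_not_mem' he''] at h2
        rw [Finset.sum_insert hfD] at h2
        linarith
      set m := max (G.L e) (ω f) with hm
      have hmU : m < G.U e := max_lt hLU hfU
      have hxI : (m + G.U e) / 2 ∈ G.I e := by
        rw [mem_I_nontriv hLU]
        constructor
        · have : G.L e ≤ m := le_max_left _ _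
          linarith
        · linarith
      have := hle _ hxI
      have : ω f ≤ m := le_max_right _ _
      linarith [hle _ hxI, le_max_right (G.L e) (ω f)]
    · -- swap e in across the low cut
      obtain ⟨f, hfT, ⟨a, b, hab, ha, hb⟩, htree'', herase'', hemem⟩ :=
        exch_in hTtree he hends (fun z => G.ConnectsVia (G.lowset ω e) u z)
          (cv_refl _ _) hlow
      have hLf : G.L e < ω f := by
        by_contra hc
        push_neg at hc
        have hfmem : f ∈ G.lowset ω e := Finset.mem_filter.2
          ⟨Finset.mem_erase.2 ⟨fun hfe => he (hfe ▸ hfT), Finset.mem_univ f⟩, hc⟩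
        exact hb (cv_trans ha (cv_step hfmem hab))
      have hge : ∀ x ∈ G.I e, ω f ≤ x := by
        intro x hx
        have h2 := (hT x hx).2 _ htree''
        rw [sum_update_of_not_mem' he, sum_update_of_mem' hemem, herase''] at h2
        have h3 := Finset.add_sum_erase T ω hfT
        linarith
      set m := min (G.U e) (ω f) with hm
      have hLm : G.L e < m := lt_min hLU hLf
      have hxI : (G.L e + m) / 2 ∈ G.I e := by
        rw [mem_I_nontriv hLU]
        constructor
        · linarith
        · have : m ≤ G.U e := min_le_left _ _
          linarith
      have h4 := hge _ hxI
      have h5 : m ≤ ω f := min_le_right _ _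
      linarith
  · intro hcase
    have hneV : Nonempty G.V := ⟨u⟩
    rcases hcase with hlow | hhi
    · by_cases hex : ∃ T₀, G.IsSpanningTree T₀ ∧ e ∉ T₀
      · obtain ⟨T, hTmem, hTmin⟩ := Finset.exists_min_image
          ((Finset.univ : Finset (Finset G.E)).filter
            (fun T => G.IsSpanningTree T ∧ e ∉ T))
          (fun T => ∑ f ∈ T, ω f)
          ⟨hex.choose, Finset.mem_filter.2 ⟨Finset.mem_univ _,
            hex.choose_spec⟩⟩
        obtain ⟨-, hTtree, heT⟩ := Finset.mem_filter.1 hTmem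
        refine ⟨T, fun x hx => ⟨hTtree, fun T' hT' => ?_⟩⟩
        rw [sum_update_of_not_mem' heT]
        by_cases he' : e ∈ T'
        · obtain ⟨f, hfW, hfD, htree'', he''⟩ :=
            exch_out hT' he' hends (G.not_mem_lowset ω e) hlow
          have hfL : ω f ≤ G.L e := (Finset.mem_filter.1 hfW).2
          have hmin := hTmin _ (Finset.mem_filter.2
            ⟨Finset.mem_univ _, htree'', he''⟩)
          rw [Finset.sum_insert hfD] at hmin
          rw [sum_update_of_mem' he']
          have hLx : G.L e < x := ((mem_I_nontriv hLU).1 hx).1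
          linarith
        · rw [sum_update_of_not_mem' he']
          exact hTmin _ (Finset.mem_filter.2 ⟨Finset.mem_univ _, hT', he'⟩)
      · push_neg at hex
        obtain ⟨T, hTmem, hTmin⟩ := Finset.exists_min_image
          ((Finset.univ : Finset (Finset G.E)).filter
            (fun T => G.IsSpanningTree T))
          (fun T => ∑ f ∈ T.erase e, ω f)
          (by
            obtain ⟨T₀, hT₀⟩ := G.exists_spanning_tree hneV
            exact ⟨T₀, Finset.mem_filter.2 ⟨Finset.mem_univ _, hT₀⟩⟩)
        have hTtree := (Finset.mem_filter.1 hTmem).2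
        refine ⟨T, fun x hx => ⟨hTtree, fun T' hT' => ?_⟩⟩
        rw [sum_update_of_mem' (hex T hTtree), sum_update_of_mem' (hex T' hT')]
        have := hTmin _ (Finset.mem_filter.2 ⟨Finset.mem_univ _, hT'⟩)
        linarith
    · by_cases hex : ∃ T₀, G.IsSpanningTree T₀ ∧ e ∈ T₀
      · obtain ⟨T, hTmem, hTmin⟩ := Finset.exists_min_image
          ((Finset.univ : Finset (Finset G.E)).filter
            (fun T => G.IsSpanningTree T ∧ e ∈ T))
          (fun T => ∑ f ∈ T.erase e, ω f)
          ⟨hex.choose, Finset.mem_filter.2 ⟨Finset.mem_univ _,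
            hex.choose_spec⟩⟩
        obtain ⟨-, hTtree, heT⟩ := Finset.mem_filter.1 hTmem
        refine ⟨T, fun x hx => ⟨hTtree, fun T' hT' => ?_⟩⟩
        rw [sum_update_of_mem' heT]
        by_cases he' : e ∈ T'
        · rw [sum_update_of_mem' he']
          have := hTmin _ (Finset.mem_filter.2 ⟨Finset.mem_univ _, hT', he'⟩)
          linarith
        · obtain ⟨f, hfT, ⟨a, b, hab, ha, hb⟩, htree'', herase'', hemem⟩ :=
            exch_in hT' he' hends (fun z => G.ConnectsVia (G.smallset ω e) u z)
              (cv_refl _ _) hhi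
          have hUf : G.U e ≤ ω f := by
            by_contra hc
            push_neg at hc
            have hfmem : f ∈ G.smallset ω e := Finset.mem_filter.2
              ⟨Finset.mem_erase.2 ⟨fun hfe => he' (hfe ▸ hfT), Finset.mem_univ f⟩,
                hc⟩
            exact hb (cv_trans ha (cv_step hfmem hab))
          have hmin := hTmin _ (Finset.mem_filter.2
            ⟨Finset.mem_univ _, htree'', hemem⟩)
          rw [herase''] at hmin
          rw [sum_update_of_not_mem' he']
          have h3 := Finset.add_sum_erase T' ω hfT
          have hxU : x < G.U e := ((mem_I_nontriv hLU).1 hx).2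
          linarith
      · push_neg at hex
        obtain ⟨T, hTmem, hTmin⟩ := Finset.exists_min_image
          ((Finset.univ : Finset (Finset G.E)).filter
            (fun T => G.IsSpanningTree T))
          (fun T => ∑ f ∈ T, ω f)
          (by
            obtain ⟨T₀, hT₀⟩ := G.exists_spanning_tree hneV
            exact ⟨T₀, Finset.mem_filter.2 ⟨Finset.mem_univ _, hT₀⟩⟩)
        have hTtree := (Finset.mem_filter.1 hTmem).2
        refine ⟨T, fun x hx => ⟨hTtree, fun T' hT' => ?_⟩⟩
        rw [sum_update_of_not_mem' (hex T hTtree), sum_update_of_not_mem' (hex T' hT')]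
        exact hTmin _ (Finset.mem_filter.2 ⟨Finset.mem_univ _, hT'⟩)

theorem mandatory_char {ω : G.E → ℝ} (hw : G.Valid ω) {e : G.E} {u v : G.V}
    (hends : G.ends e = s(u, v)) (hLU : G.L e < G.U e) :
    G.Mandatory ω e ↔
      (¬ G.ConnectsVia (G.lowset ω e) u v ∧ G.ConnectsVia (G.smallset ω e) u v) := by
  rw [mandatory_iff_not_feasible, feasible_erase_iff hw, feas_char hends hLU]
  tauto

theorem not_mandatory_of_trivial {ω : G.E → ℝ} (hw : G.Valid ω) {e : G.E}
    (hLU : G.L e = G.U e) : ¬ G.Mandatory ω e := by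
  rw [mandatory_iff_not_feasible, not_not, feasible_erase_iff hw]
  have hneV : Nonempty G.V := by
    have h := G.ends e
    induction h using Sym2.ind with
    | _ a b => exact ⟨a⟩
  obtain ⟨T, hTmem, hTmin⟩ := Finset.exists_min_image
    ((Finset.univ : Finset (Finset G.E)).filter (fun T => G.IsSpanningTree T))
    (fun T => ∑ f ∈ T, Function.update ω e (G.L e) f)
    (by
      obtain ⟨T₀, hT₀⟩ := G.exists_spanning_tree hneV
      exact ⟨T₀, Finset.mem_filter.2 ⟨Finset.mem_univ _, hT₀⟩⟩)
  have hTtree := (Finset.mem_filter.1 hTmem).2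
  refine ⟨T, fun x hx => ?_⟩
  have hxL : x = G.L e := by
    rcases hx with ⟨_, h⟩ | ⟨h1, h2⟩
    · exact h
    · rw [hLU] at h1; linarith
  subst hxL
  exact ⟨hTtree, fun T' hT' => hTmin _ (Finset.mem_filter.2 ⟨Finset.mem_univ _, hT'⟩)⟩

end UncGraph

end Aux4

section Aux5

open Finset

namespace UncGraph

variable {G : UncGraph}

theorem valid_pw (G : UncGraph) : G.Valid G.pw := fun e => G.pw_mem e

theorem kErr_eq_zero_iff {p w : G.E → ℝ} {e e' : G.E} :
    G.kErr p w e e' = 0 ↔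
      ((p e ≤ G.L e' ∧ w e ≤ G.L e') ∨ (G.U e' ≤ p e ∧ G.U e' ≤ w e) ∨
        (G.L e' < p e ∧ p e < G.U e' ∧ G.L e' < w e ∧ w e < G.U e')) := by
  unfold UncGraph.kErr
  split <;> simp_all

theorem mandatory_invariant {w : G.E → ℝ} (hw : G.Valid w) {e : G.E}
    (hz : G.hleft G.pw w e = 0) :
    (G.Mandatory w e ↔ G.Mandatory G.pw e) := by
  by_cases hLU : G.L e = G.U e
  · constructor
    · intro h; exact absurd h (not_mandatory_of_trivial hw hLU)
    · intro h; exact absurd h (not_mandatory_of_trivial G.valid_pw hLU)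
  · have hlt : G.L e < G.U e := lt_of_le_of_ne (G.LU e) hLU
    obtain ⟨u, v, hends⟩ : ∃ u v, G.ends e = s(u, v) := by
      induction G.ends e using Sym2.ind with
      | _ a b => exact ⟨a, b, rfl⟩
    have hall : ∀ f ∈ Finset.univ.erase e, G.kErr G.pw w f e = 0 := by
      intro f hf
      exact (Finset.sum_eq_zero_iff).1 hz f hf
    have hrel : ∀ f, f ≠ e →
        ((G.pw f ≤ G.L e ↔ w f ≤ G.L e) ∧ (G.pw f < G.U e ↔ w f < G.U e)) := by
      intro f hfe
      have h0 := kErr_eq_zero_iff.1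
        (hall f (Finset.mem_erase.2 ⟨hfe, Finset.mem_univ f⟩))
      rcases h0 with ⟨h1, h2⟩ | ⟨h1, h2⟩ | ⟨h1, h2, h3, h4⟩
      · constructor
        · constructor <;> intro <;> assumption
        · constructor <;> intro <;> linarith
      · constructor
        · constructor <;> intro <;> linarith
        · constructor <;> intro <;> linarith
      · constructor
        · constructor <;> intro <;> linarith
        · constructor <;> intro <;> linarith
    have hlowe : G.lowset w e = G.lowset G.pw e := by
      ext f
      simp only [UncGraph.lowset, Finset.mem_filter, Finset.mem_erase,
        Finset.mem_univ, and_true, true_and]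
      constructor
      · rintro ⟨h1, h2⟩; exact ⟨h1, ((hrel f h1).1).2 h2⟩
      · rintro ⟨h1, h2⟩; exact ⟨h1, ((hrel f h1).1).1 h2⟩
    have hsmalle : G.smallset w e = G.smallset G.pw e := by
      ext f
      simp only [UncGraph.smallset, Finset.mem_filter, Finset.mem_erase,
        Finset.mem_univ, and_true, true_and]
      constructor
      · rintro ⟨h1, h2⟩; exact ⟨h1, ((hrel f h1).2).2 h2⟩
      · rintro ⟨h1, h2⟩; exact ⟨h1, ((hrel f h1).2).1 h2⟩
    rw [mandatory_char hw hends hlt, mandatory_char G.valid_pw hends hlt,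
      hlowe, hsmalle]

theorem sum_hleft_eq_sum_hright (G : UncGraph) (p w : G.E → ℝ) :
    ∑ e, G.hleft p w e = ∑ e, G.hright p w e := by
  classical
  unfold UncGraph.hleft UncGraph.hright
  have key : ∀ g : G.E → G.E → ℕ,
      (∑ e, ∑ e' ∈ Finset.univ.erase e, g e e') =
        ∑ e, ∑ e', if e' ≠ e then g e e' else 0 := by
    intro g
    refine Finset.sum_congr rfl fun e _ => ?_
    rw [← Finset.sum_filter]
    congr 1
    ext x
    simp [Finset.mem_erase, and_comm]
  rw [key, key, Finset.sum_comm]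
  refine Finset.sum_congr rfl fun x _ => Finset.sum_congr rfl fun y _ => ?_
  by_cases h : x = y
  · subst h; simp
  · simp [h, Ne.symm h]

end UncGraph

end Aux5
/-- every edge in the symmetric difference of the mandatory set
`E_M` and the prediction mandatory set `E_P` has `h←(e) ≥ 1`; consequently
`k_h ≥ |E_M Δ E_P|`. -/
theorem hop_distance_ge_mandatory_symmdiff
    (G : UncGraph) (w : G.E → ℝ) (hw : G.Valid w) :
    (∀ e : G.E,
      ((G.Mandatory w e ∧ ¬ G.PredMandatory e) ∨
        (G.PredMandatory e ∧ ¬ G.Mandatory w e)) →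
      1 ≤ G.hleft G.pw w e) ∧
    (Finset.univ.filter fun e : G.E =>
        (G.Mandatory w e ∧ ¬ G.PredMandatory e) ∨
          (G.PredMandatory e ∧ ¬ G.Mandatory w e)).card ≤ G.khop w := by
  classical
  have part1 : ∀ e : G.E,
      ((G.Mandatory w e ∧ ¬ G.PredMandatory e) ∨
        (G.PredMandatory e ∧ ¬ G.Mandatory w e)) →
      1 ≤ G.hleft G.pw w e := by
    intro e hsym
    by_contra h1
    have hz : G.hleft G.pw w e = 0 := by omega
    have hiff := UncGraph.mandatory_invariant hw hz
    have hpred : G.PredMandatory e ↔ G.Mandatory G.pw e := Iff.rfl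
    rcases hsym with ⟨hm, hnp⟩ | ⟨hp, hnm⟩
    · exact hnp (hpred.2 (hiff.1 hm))
    · exact hnm (hiff.2 (hpred.1 hp))
  refine ⟨part1, ?_⟩
  have h2 : (Finset.univ.filter fun e : G.E =>
        (G.Mandatory w e ∧ ¬ G.PredMandatory e) ∨
          (G.PredMandatory e ∧ ¬ G.Mandatory w e)).card ≤
      ∑ e ∈ (Finset.univ.filter fun e : G.E =>
        (G.Mandatory w e ∧ ¬ G.PredMandatory e) ∨
          (G.PredMandatory e ∧ ¬ G.Mandatory w e)), G.hleft G.pw w e := by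
    rw [Finset.card_eq_sum_ones]
    refine Finset.sum_le_sum fun e he => ?_
    exact part1 e (Finset.mem_filter.1 he).2
  have h3 : ∑ e ∈ (Finset.univ.filter fun e : G.E =>
        (G.Mandatory w e ∧ ¬ G.PredMandatory e) ∨
          (G.PredMandatory e ∧ ¬ G.Mandatory w e)), G.hleft G.pw w e ≤
      ∑ e, G.hleft G.pw w e :=
    Finset.sum_le_sum_of_subset (Finset.filter_subset _ _)
  have h4 : ∑ e, G.hleft G.pw w e = G.khop w :=
    G.sum_hleft_eq_sum_hright G.pw w
  omega
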